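/- Let A ∈ ℝ^{m×n} have rank n, R_s ∈ ℝ^{n×n} invertible, E_s, E_A with ‖E_s‖·‖R_s⁻¹‖ < 1, ε_A = ‖E_A‖/‖A‖, A_p = A R_s⁻¹, A_1 = (A+E_A)(R_s+E_s)⁻¹, A_2 = A + E_A. Let x* = A† b and suppose x̂ ≠ 0 satisfies A_1ᵀ A_2 x̂ = A_1ᵀ b (in particular A_pᵀ A is assumed invertible). Then ‖x̂ − x*‖/‖x̂‖ ≤ κ(A_pᵀA)·ν·ε_A·( κ(R_s)·‖A x̂ − b‖/(‖A‖·‖x̂‖) + 1 + κ(A)·ε_A ), where ν = ‖A_p‖·‖A‖/‖A_pᵀA‖. -/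

import Mathlib

open Matrix

/-- Spectral (operator 2-) norm of a real matrix. -/
noncomputable def spNorm {m n : ℕ} (M : Matrix (Fin m) (Fin n) ℝ) : ℝ :=
  ‖LinearMap.toContinuousLinearMap (Matrix.toEuclideanLin M)‖

/-- Euclidean 2-norm of a real vector. -/
noncomputable def vNorm {n : ℕ} (x : Fin n → ℝ) : ℝ :=
  ‖(WithLp.equiv 2 (Fin n → ℝ)).symm x‖

/-- Moore–Penrose left inverse of a full column rank matrix. -/
noncomputable def pinv {m n : ℕ} (A : Matrix (Fin m) (Fin n) ℝ) : Matrix (Fin n) (Fin m) ℝ :=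
  (Aᵀ * A)⁻¹ * Aᵀ

/-- Condition number with respect to left inversion. -/
noncomputable def kappa {m n : ℕ} (A : Matrix (Fin m) (Fin n) ℝ) : ℝ :=
  spNorm A * spNorm (pinv A)

open scoped Matrix.Norms.L2Operator

lemma spNorm_eq_norm {m n : ℕ} (M : Matrix (Fin m) (Fin n) ℝ) : spNorm M = ‖M‖ := rfl

lemma vNorm_nonneg {n : ℕ} (x : Fin n → ℝ) : 0 ≤ vNorm x := norm_nonneg _

lemma vNorm_pos {n : ℕ} {x : Fin n → ℝ} (hx : x ≠ 0) : 0 < vNorm x := by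
  rw [vNorm, norm_pos_iff]
  intro h
  apply hx
  have := congrArg (WithLp.equiv 2 (Fin n → ℝ)) h
  simpa using this

lemma vNorm_mulVec_le {m n : ℕ} (M : Matrix (Fin m) (Fin n) ℝ) (x : Fin n → ℝ) :
    vNorm (M *ᵥ x) ≤ ‖M‖ * vNorm x :=
  M.l2_opNorm_mulVec ((WithLp.equiv 2 (Fin n → ℝ)).symm x)

lemma vNorm_add_le {n : ℕ} (x y : Fin n → ℝ) : vNorm (x + y) ≤ vNorm x + vNorm y := by
  rw [vNorm, vNorm, vNorm, WithLp.equiv_symm_apply, WithLp.toLp_add]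
  exact norm_add_le _ _

lemma vNorm_neg {n : ℕ} (x : Fin n → ℝ) : vNorm (-x) = vNorm x := by
  rw [vNorm, vNorm, WithLp.equiv_symm_apply, WithLp.toLp_neg, norm_neg]

lemma spNorm_transpose {m n : ℕ} (M : Matrix (Fin m) (Fin n) ℝ) : spNorm Mᵀ = spNorm M := by
  rw [spNorm_eq_norm, spNorm_eq_norm, ← Matrix.conjTranspose_eq_transpose_of_trivial,
    Matrix.l2_opNorm_conjTranspose]

lemma norm_pos_of_ne_zero {m n : ℕ} {M : Matrix (Fin m) (Fin n) ℝ} (h : M ≠ 0) : 0 < ‖M‖ :=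
  norm_pos_iff.mpr h

theorem stmt_7 {m n : ℕ} (A EA : Matrix (Fin m) (Fin n) ℝ) (Rs Es : Matrix (Fin n) (Fin n) ℝ)
    (b : Fin m → ℝ) (xh : Fin n → ℝ)
    (hA : A.rank = n) (hR : IsUnit Rs.det) (hEs : spNorm Es * spNorm Rs⁻¹ < 1)
    (εA : ℝ) (hεA : εA = spNorm EA / spNorm A)
    (Ap : Matrix (Fin m) (Fin n) ℝ) (hAp : Ap = A * Rs⁻¹)
    (A₁ : Matrix (Fin m) (Fin n) ℝ) (hA₁ : A₁ = (A + EA) * (Rs + Es)⁻¹)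
    (A₂ : Matrix (Fin m) (Fin n) ℝ) (hA₂ : A₂ = A + EA)
    (hInv : IsUnit (Apᵀ * A).det)
    (xs : Fin n → ℝ) (hxs : xs = pinv A *ᵥ b)
    (hx : (A₁ᵀ * A₂) *ᵥ xh = A₁ᵀ *ᵥ b)
    (hxne : xh ≠ 0)
    (ν : ℝ) (hν : ν = spNorm Ap * spNorm A / spNorm (Apᵀ * A)) :
    vNorm (xh - xs) / vNorm xh ≤
      kappa (Apᵀ * A) * ν * εA *
        (kappa Rs * (vNorm (A *ᵥ xh - b) / (spNorm A * vNorm xh))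
          + 1 + kappa A * εA) := by
  -- n is positive
  rcases Nat.eq_zero_or_pos n with hn | hn
  · exfalso; apply hxne; funext i; exact absurd i.isLt (by omega)
  have : NeZero n := ⟨by omega⟩
  -- invertibility of Rs + Es
  have hRsEs : IsUnit (Rs + Es).det := by
    have hX : ‖Es * Rs⁻¹‖ < 1 :=
      lt_of_le_of_lt (Matrix.l2_opNorm_mul Es Rs⁻¹) hEs
    have h1 : IsUnit (1 + Es * Rs⁻¹) := by
      have := (Units.oneSub (-(Es * Rs⁻¹)) (by rwa [norm_neg])).isUnit
      rwa [Units.val_oneSub, sub_neg_eq_add] at this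
    have hfac : Rs + Es = (1 + Es * Rs⁻¹) * Rs := by
      rw [add_mul, one_mul, Matrix.nonsing_inv_mul_cancel_right _ _ hR, add_comm]
    rw [hfac, Matrix.det_mul]
    exact (h1.map detMonoidHom).mul hR
  -- exact normal equations for the perturbed problem
  have h2 : (A₂ᵀ * A₂) *ᵥ xh = A₂ᵀ *ᵥ b := by
    have hA1T : A₁ᵀ = ((Rs + Es)⁻¹)ᵀ * A₂ᵀ := by
      rw [hA₁, ← hA₂, Matrix.transpose_mul]
    have c1 : (Rs + Es)ᵀ * (Rs + Es)⁻¹ᵀ = 1 := by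
      rw [← Matrix.transpose_mul, Matrix.nonsing_inv_mul _ hRsEs, Matrix.transpose_one]
    have hx2 : ((Rs + Es)ᵀ * A₁ᵀ * A₂) *ᵥ xh = ((Rs + Es)ᵀ * A₁ᵀ) *ᵥ b := by
      rw [Matrix.mul_assoc, ← Matrix.mulVec_mulVec, hx, Matrix.mulVec_mulVec]
    have c2 : (Rs + Es)ᵀ * A₁ᵀ = A₂ᵀ := by
      rw [hA1T, ← Matrix.mul_assoc, c1, Matrix.one_mul]
    rwa [c2] at hx2
  -- A has full column rank
  have hATA : IsUnit (Aᵀ * A).det := by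
    have hrank : (Aᵀ * A).rank = n := by rw [Matrix.rank_transpose_mul_self, hA]
    have hsurj : Function.Surjective (Aᵀ * A).mulVec := by
      have htop : LinearMap.range (Aᵀ * A).mulVecLin = ⊤ := by
        apply Submodule.eq_top_of_finrank_eq
        rw [← Matrix.rank, hrank, Module.finrank_fintype_fun_eq_card, Fintype.card_fin]
      intro v
      obtain ⟨w, hw⟩ := LinearMap.range_eq_top.mp htop v
      exact ⟨w, hw⟩
    exact (Matrix.isUnit_iff_isUnit_det _).mp (Matrix.mulVec_surjective_iff_isUnit.mp hsurj)
  have hpinvA : pinv A * A = 1 := by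
    show (Aᵀ * A)⁻¹ * Aᵀ * A = 1
    rw [Matrix.mul_assoc, Matrix.nonsing_inv_mul _ hATA]
  -- normal equations for xs
  have hxs' : (Aᵀ * A) *ᵥ xs = Aᵀ *ᵥ b := by
    rw [hxs]
    show (Aᵀ * A) *ᵥ (((Aᵀ * A)⁻¹ * Aᵀ) *ᵥ b) = Aᵀ *ᵥ b
    rw [Matrix.mulVec_mulVec, ← Matrix.mul_assoc, Matrix.mul_nonsing_inv _ hATA,
      Matrix.one_mul]
  -- the key identity
  set r : Fin m → ℝ := A *ᵥ xh - b with hr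
  set d : Fin n → ℝ := xh - xs with hd
  have e2 : Aᵀ *ᵥ r = -(Aᵀ *ᵥ (EA *ᵥ xh) + EAᵀ *ᵥ r + EAᵀ *ᵥ (EA *ᵥ xh)) := by
    have h2' := h2
    rw [hA₂] at h2'
    simp only [Matrix.transpose_add, Matrix.add_mul, Matrix.mul_add, Matrix.add_mulVec,
      ← Matrix.mulVec_mulVec] at h2'
    simp only [hr, Matrix.mulVec_sub]
    linear_combination (norm := module) h2'
  have e1 : (Aᵀ * A) *ᵥ d = Aᵀ *ᵥ r := by
    simp only [hd, hr, Matrix.mulVec_sub, hxs', ← Matrix.mulVec_mulVec]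
  have hApT : Apᵀ = Rs⁻¹ᵀ * Aᵀ := by rw [hAp, Matrix.transpose_mul]
  have hkey : (Apᵀ * A) *ᵥ d =
      -(Apᵀ *ᵥ (EA *ᵥ xh) + Rs⁻¹ᵀ *ᵥ (EAᵀ *ᵥ r) + Rs⁻¹ᵀ *ᵥ (EAᵀ *ᵥ (EA *ᵥ xh))) := by
    have : (Apᵀ * A) *ᵥ d = Rs⁻¹ᵀ *ᵥ ((Aᵀ * A) *ᵥ d) := by
      rw [Matrix.mulVec_mulVec, ← Matrix.mul_assoc, ← hApT]
    rw [this, e1, e2, Matrix.mulVec_neg, Matrix.mulVec_add, Matrix.mulVec_add,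
      Matrix.mulVec_mulVec, ← hApT]
  have hdval : d = (Apᵀ * A)⁻¹ *ᵥ
      (-(Apᵀ *ᵥ (EA *ᵥ xh) + Rs⁻¹ᵀ *ᵥ (EAᵀ *ᵥ r) + Rs⁻¹ᵀ *ᵥ (EAᵀ *ᵥ (EA *ᵥ xh)))) := by
    rw [← hkey, Matrix.mulVec_mulVec, Matrix.nonsing_inv_mul _ hInv, Matrix.one_mulVec]
  -- abbreviations for norms
  set a : ℝ := ‖A‖ with ha'
  set p : ℝ := ‖Ap‖ with hp'
  set e : ℝ := ‖EA‖ with he'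
  set mi : ℝ := ‖(Apᵀ * A)⁻¹‖ with hmi'
  set mn : ℝ := ‖Apᵀ * A‖ with hmn'
  set rs : ℝ := ‖Rs‖ with hrs'
  set ri : ℝ := ‖Rs⁻¹‖ with hri'
  set da : ℝ := ‖pinv A‖ with hda'
  set rn : ℝ := vNorm r with hrn'
  set xn : ℝ := vNorm xh with hxn'
  set dn : ℝ := vNorm d with hdn'
  -- positivity facts
  have hxn : 0 < xn := vNorm_pos hxne
  have haA : 0 < a := by
    apply norm_pos_of_ne_zero
    intro h0
    rw [h0, Matrix.rank_zero] at hA; omega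
  have hmn : 0 < mn := by
    apply norm_pos_of_ne_zero
    intro h0
    rw [h0, Matrix.det_zero] at hInv
    exact (by simpa using hInv : False)
  have hrs : 0 < rs := by
    apply norm_pos_of_ne_zero
    intro h0
    rw [h0, Matrix.det_zero] at hR
    exact (by simpa using hR : False)
  have hp : 0 ≤ p := norm_nonneg _
  have he : 0 ≤ e := norm_nonneg _
  have hmi : 0 ≤ mi := norm_nonneg _
  have hri : 0 ≤ ri := norm_nonneg _
  have hda : 0 ≤ da := norm_nonneg _
  have hrn : 0 ≤ rn := vNorm_nonneg _
  -- structural inequalities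
  have h2' : a ≤ p * rs := by
    have : A = Ap * Rs := by rw [hAp, Matrix.nonsing_inv_mul_cancel_right _ _ hR]
    calc a = ‖Ap * Rs‖ := by rw [ha', this]
    _ ≤ p * rs := Matrix.l2_opNorm_mul _ _
  have h3' : ri ≤ da * p := by
    have : Rs⁻¹ = pinv A * Ap := by
      rw [hAp, ← Matrix.mul_assoc, hpinvA, Matrix.one_mul]
    calc ri = ‖pinv A * Ap‖ := by rw [hri', this]
    _ ≤ da * p := Matrix.l2_opNorm_mul _ _
  have hptn : ‖Apᵀ‖ = p := by rw [hp', ← spNorm_eq_norm, ← spNorm_eq_norm, spNorm_transpose]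
  have hetn : ‖EAᵀ‖ = e := by rw [he', ← spNorm_eq_norm, ← spNorm_eq_norm, spNorm_transpose]
  have hritn : ‖Rs⁻¹ᵀ‖ = ri := by rw [hri', ← spNorm_eq_norm, ← spNorm_eq_norm, spNorm_transpose]
  -- the main bound
  have hbound : dn ≤ mi * (p * (e * xn) + ri * (e * rn) + ri * (e * (e * xn))) := by
    have b1 : vNorm (Apᵀ *ᵥ (EA *ᵥ xh)) ≤ p * (e * xn) := by
      calc vNorm (Apᵀ *ᵥ (EA *ᵥ xh)) ≤ ‖Apᵀ‖ * vNorm (EA *ᵥ xh) := vNorm_mulVec_le _ _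
      _ ≤ ‖Apᵀ‖ * (e * xn) := by
          apply mul_le_mul_of_nonneg_left (vNorm_mulVec_le _ _) (norm_nonneg _)
      _ = p * (e * xn) := by rw [hptn]
    have b2 : vNorm (Rs⁻¹ᵀ *ᵥ (EAᵀ *ᵥ r)) ≤ ri * (e * rn) := by
      calc vNorm (Rs⁻¹ᵀ *ᵥ (EAᵀ *ᵥ r)) ≤ ‖Rs⁻¹ᵀ‖ * vNorm (EAᵀ *ᵥ r) := vNorm_mulVec_le _ _
      _ ≤ ‖Rs⁻¹ᵀ‖ * (‖EAᵀ‖ * rn) := by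
          apply mul_le_mul_of_nonneg_left (vNorm_mulVec_le _ _) (norm_nonneg _)
      _ = ri * (e * rn) := by rw [hritn, hetn]
    have b3 : vNorm (Rs⁻¹ᵀ *ᵥ (EAᵀ *ᵥ (EA *ᵥ xh))) ≤ ri * (e * (e * xn)) := by
      calc vNorm (Rs⁻¹ᵀ *ᵥ (EAᵀ *ᵥ (EA *ᵥ xh)))
          ≤ ‖Rs⁻¹ᵀ‖ * vNorm (EAᵀ *ᵥ (EA *ᵥ xh)) := vNorm_mulVec_le _ _
      _ ≤ ‖Rs⁻¹ᵀ‖ * (‖EAᵀ‖ * vNorm (EA *ᵥ xh)) := by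
          apply mul_le_mul_of_nonneg_left (vNorm_mulVec_le _ _) (norm_nonneg _)
      _ ≤ ‖Rs⁻¹ᵀ‖ * (‖EAᵀ‖ * (e * xn)) := by
          apply mul_le_mul_of_nonneg_left _ (norm_nonneg _)
          exact mul_le_mul_of_nonneg_left (vNorm_mulVec_le _ _) (norm_nonneg _)
      _ = ri * (e * (e * xn)) := by rw [hritn, hetn]
    calc dn = vNorm ((Apᵀ * A)⁻¹ *ᵥ
        (-(Apᵀ *ᵥ (EA *ᵥ xh) + Rs⁻¹ᵀ *ᵥ (EAᵀ *ᵥ r) + Rs⁻¹ᵀ *ᵥ (EAᵀ *ᵥ (EA *ᵥ xh))))) := by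
          rw [hdn', hdval]
    _ ≤ mi * vNorm (-(Apᵀ *ᵥ (EA *ᵥ xh) + Rs⁻¹ᵀ *ᵥ (EAᵀ *ᵥ r)
          + Rs⁻¹ᵀ *ᵥ (EAᵀ *ᵥ (EA *ᵥ xh)))) := vNorm_mulVec_le _ _
    _ ≤ mi * (p * (e * xn) + ri * (e * rn) + ri * (e * (e * xn))) := by
        apply mul_le_mul_of_nonneg_left _ hmi
        rw [vNorm_neg]
        calc vNorm (Apᵀ *ᵥ (EA *ᵥ xh) + Rs⁻¹ᵀ *ᵥ (EAᵀ *ᵥ r) + Rs⁻¹ᵀ *ᵥ (EAᵀ *ᵥ (EA *ᵥ xh)))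
            ≤ vNorm (Apᵀ *ᵥ (EA *ᵥ xh) + Rs⁻¹ᵀ *ᵥ (EAᵀ *ᵥ r))
              + vNorm (Rs⁻¹ᵀ *ᵥ (EAᵀ *ᵥ (EA *ᵥ xh))) := vNorm_add_le _ _
        _ ≤ (vNorm (Apᵀ *ᵥ (EA *ᵥ xh)) + vNorm (Rs⁻¹ᵀ *ᵥ (EAᵀ *ᵥ r)))
              + vNorm (Rs⁻¹ᵀ *ᵥ (EAᵀ *ᵥ (EA *ᵥ xh))) :=
            add_le_add (vNorm_add_le _ _) le_rfl
        _ ≤ p * (e * xn) + ri * (e * rn) + ri * (e * (e * xn)) := by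
            exact add_le_add (add_le_add b1 b2) b3
  -- rewrite kappas and pinvs
  have hpinv_sq : ∀ (M : Matrix (Fin n) (Fin n) ℝ), IsUnit M.det → pinv M = M⁻¹ := by
    intro M hM
    have hMT : IsUnit Mᵀ.det := by rwa [Matrix.det_transpose]
    show (Mᵀ * M)⁻¹ * Mᵀ = M⁻¹
    rw [Matrix.mul_inv_rev, Matrix.nonsing_inv_mul_cancel_right _ _ hMT]
  have hkM : kappa (Apᵀ * A) = mn * mi := by
    rw [kappa, hpinv_sq _ hInv, spNorm_eq_norm, spNorm_eq_norm]
  have hkR : kappa Rs = rs * ri := by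
    rw [kappa, hpinv_sq _ hR, spNorm_eq_norm, spNorm_eq_norm]
  have hkA : kappa A = a * da := by rw [kappa, spNorm_eq_norm, spNorm_eq_norm]
  rw [hkM, hkR, hkA, hν, hεA]
  rw [spNorm_eq_norm, spNorm_eq_norm, spNorm_eq_norm, spNorm_eq_norm]
  simp only [← ha', ← hp', ← he', ← hmn']
  -- final arithmetic
  have hrhs1 : mn * mi * (p * a / mn) * (e / a) = mi * (p * e) := by
    field_simp
  have hrhs2 : a * da * (e / a) = da * e := by field_simp
  rw [hrhs1, hrhs2]
  rw [div_le_iff₀ hxn]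
  have key : mi * (p * (e * xn) + ri * (e * rn) + ri * (e * (e * xn)))
      ≤ mi * (p * e) * (rs * ri * (rn / (a * xn)) + 1 + da * e) * xn := by
    have hax : 0 < a * xn := mul_pos haA hxn
    have expand : mi * (p * e) * (rs * ri * (rn / (a * xn)) + 1 + da * e) * xn
        = mi * (p * e * (rs * ri * rn) / a + p * e * xn + p * e * (da * e) * xn) := by
      field_simp
    rw [expand]
    apply mul_le_mul_of_nonneg_left _ hmi
    have t1 : ri * (e * rn) ≤ p * e * (rs * ri * rn) / a := by
      rw [le_div_iff₀ haA]
      have h := mul_le_mul_of_nonneg_left h2' (mul_nonneg (mul_nonneg he hrn) hri)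
      calc ri * (e * rn) * a = e * rn * ri * a := by ring
      _ ≤ e * rn * ri * (p * rs) := h
      _ = p * e * (rs * ri * rn) := by ring
    have t3 : ri * (e * (e * xn)) ≤ p * e * (da * e) * xn := by
      have h := mul_le_mul_of_nonneg_right h3'
        (mul_nonneg he (mul_nonneg he (le_of_lt hxn)))
      calc ri * (e * (e * xn)) ≤ da * p * (e * (e * xn)) := h
      _ = p * e * (da * e) * xn := by ring
    have t2 : p * (e * xn) = p * e * xn := by ring
    linarith
  calc dn ≤ mi * (p * (e * xn) + ri * (e * rn) + ri * (e * (e * xn))) := hbound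
  _ ≤ mi * (p * e) * (rs * ri * (rn / (a * xn)) + 1 + da * e) * xn := key
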